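/- Sufficient-funds invariant for sequential executions: let S = (τ_1, ..., τ_m) be a sequence of transfers such that for each k, the amount v(τ_k) satisfies v(τ_k) ≤ total(snd(τ_k), {τ_1,...,τ_{k-1}}). Then for every process j and every prefix length k, total(j, {τ_1,...,τ_k}) ≥ 0. -/

import Mathlib

structure Transfer (P : Type) where
  snd : P
  amt : ℝ
  rcv : P
  sn : ℕ

noncomputable instance {P : Type} [DecidableEq P] : DecidableEq (Transfer P) :=
  Classical.decEq _

noncomputable def total {P : Type} [DecidableEq P] (init : P → ℝ) (j : P)
    (O : Finset (Transfer P)) : ℝ :=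
  init j + ∑ τ ∈ O.filter (fun τ => τ.rcv = j), τ.amt
         - ∑ τ ∈ O.filter (fun τ => τ.snd = j), τ.amt

noncomputable def totalL {P : Type} [DecidableEq P] (init : P → ℝ) (j : P)
    (l : List (Transfer P)) : ℝ :=
  init j + ((l.filter (fun τ => τ.rcv = j)).map Transfer.amt).sum
         - ((l.filter (fun τ => τ.snd = j)).map Transfer.amt).sum

theorem sufficient_funds_invariant {P : Type} [DecidableEq P] (init : P → ℝ)
    (l : List (Transfer P))
    (hinit : ∀ j, 0 ≤ init j)
    (hamt : ∀ τ ∈ l, 0 ≤ τ.amt)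
    (hfund : ∀ k (hk : k < l.length),
      (l.get ⟨k, hk⟩).amt ≤ totalL init (l.get ⟨k, hk⟩).snd (l.take k)) :
    ∀ j k, 0 ≤ totalL init j (l.take k) := by
  have happ : ∀ (j : P) (s : List (Transfer P)) (τ : Transfer P),
      totalL init j (s ++ [τ]) = totalL init j s
        + (if τ.rcv = j then τ.amt else 0) - (if τ.snd = j then τ.amt else 0) := by
    intro j s τ
    simp only [totalL, List.filter_append, List.map_append, List.sum_append,
      List.filter_cons, List.filter_nil]
    by_cases h1 : τ.rcv = j <;> by_cases h2 : τ.snd = j <;> simp [h1, h2] <;> ring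
  intro j k
  induction k with
  | zero => simpa [totalL] using hinit j
  | succ k ih =>
    by_cases hk : k < l.length
    · have htake : l.take (k + 1) = l.take k ++ [l.get ⟨k, hk⟩] := by
        rw [List.take_succ, List.getElem?_eq_getElem hk]; rfl
      rw [htake, happ]
      have hmem : l.get ⟨k, hk⟩ ∈ l := List.get_mem l ⟨k, hk⟩
      have hamt' := hamt _ hmem
      have hfund' := hfund k hk
      have hrcv : 0 ≤ (if (l.get ⟨k, hk⟩).rcv = j then (l.get ⟨k, hk⟩).amt else 0) := by
        split
        · exact hamt'
        · exact le_refl 0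
      by_cases hs : (l.get ⟨k, hk⟩).snd = j
      · rw [if_pos hs]
        rw [hs] at hfund'
        linarith
      · rw [if_neg hs]
        linarith
    · have : l.take (k + 1) = l.take k := by
        push_neg at hk
        rw [List.take_of_length_le hk, List.take_of_length_le (by omega)]
      rw [this]; exact ih
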